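/- Let n be an integer with |n| ≥ 2, and let a_1 < a_2 < ... < a_m be positive integers with n^2 < a_1 and a_m < |n|^3, such that a_i·a_j + n is a perfect square for all i ≠ j. Then m < 0.65·log|n| + 2.24. -/

import Mathlib

set_option maxHeartbeats 1000000


lemma aux_A (A : ℤ) (hA : 2 ≤ A) :
    15*A ≤ (A^2+1)*(A^2+2) ∧ 35*A ≤ 2*((A^2+1)*(A^2+3)) ∧ 21*A ≤ (A^2+2)*(A^2+3) := by
  have h0 : (0:ℤ) ≤ A := by linarith
  have h2 : (0:ℤ) ≤ A - 2 := by linarith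
  have c1 : (0:ℤ) ≤ A^3 := pow_nonneg h0 3
  have c2 : (0:ℤ) ≤ A^2 := sq_nonneg A
  refine ⟨?_, ?_, ?_⟩
  · nlinarith [mul_nonneg h2 (by nlinarith : (0:ℤ) ≤ A^3+2*A^2+7*A-1)]
  · nlinarith [mul_nonneg h2 (by nlinarith : (0:ℤ) ≤ 2*A^3+4*A^2+16*A-3)]
  · nlinarith [mul_nonneg h2 (by nlinarith : (0:ℤ) ≤ A^3+2*A^2+9*A-3)]

lemma aux_sqrt (q X : ℤ) (hq0 : 0 ≤ q) (hX : 0 < X) (hPP : 9240*X^2 ≤ 11025*q^2) :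
    9*X ≤ 10*q := by
  by_contra hc
  push_neg at hc
  have h1 : (0:ℤ) < 9*X - 10*q := by linarith
  have h2 : (0:ℤ) < 9*X + 10*q := by linarith
  have h3 := mul_pos h1 h2
  nlinarith [h3]

lemma aux_Epos (n x y z E : ℤ) (h4 : 4 ≤ n^2) (hx : n^2 < x) (hxy : x < y) (hyz : y < z)
    (hnub : n ≤ n^2) (hE : E = z^2 - (x+y)*z - n)
    (hbig : 7*((x*y)*z^2)*z ≤ 2*(n^2*E^2)) : 1 ≤ E := by
  have hx0 : (0:ℤ) < x := by linarith
  have hy0 : (0:ℤ) < y := by linarith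
  have hz0 : (0:ℤ) < z := by linarith
  by_contra hc
  push_neg at hc
  have hE0 : E ≤ 0 := by linarith
  have hm1 : z*(x+y-z) ≤ z*(x-1) := mul_le_mul_of_nonneg_left (by linarith) (by linarith)
  have hexp : -E = z*(x+y-z) + n := by rw [hE]; ring
  have hn2 : n ≤ z - 1 := by linarith
  have hEub : -E ≤ x*z := by linarith only [hm1, hexp, hn2]
  have hxz0 : (0:ℤ) < x*z := mul_pos hx0 hz0
  have hE2 : E^2 ≤ (x*z)^2 := sq_le_sq' (by linarith) (by linarith)
  have hn2x : n^2 ≤ x - 1 := by linarith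
  have c1 : 2*(n^2*E^2) ≤ 2*((x-1)*(x*z)^2) := by
    have := mul_le_mul hn2x hE2 (sq_nonneg E) (by linarith)
    linarith only [this]
  have hxx : x*x ≤ x*y := mul_le_mul_of_nonneg_left (by linarith) (by linarith)
  have h2' : (x*x)*z^2 ≤ (x*y)*z^2 := mul_le_mul_of_nonneg_right hxx (sq_nonneg z)
  have h3' : ((x*x)*z^2)*z ≤ ((x*y)*z^2)*z := mul_le_mul_of_nonneg_right h2' (by linarith)
  have c3 : 7*((x*x)*z^2)*z ≤ 2*((x-1)*(x*z)^2) := by linarith only [h3', c1, hbig]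
  have c4 : (x^2*z^2)*(7*z) ≤ (x^2*z^2)*(2*(x-1)) := by linarith only [c3]
  have c5 : 7*z ≤ 2*(x-1) := le_of_mul_le_mul_left c4 (by positivity)
  linarith

lemma aux_final (n x y z E : ℤ) (h4 : 4 ≤ n^2) (hx : n^2 < x) (hxy : x < y) (hyz : y < z)
    (hnub : n ≤ n^2) (hnlb : -n ≤ n^2) (hE : E = z^2 - (x+y)*z - n) (hEpos : 1 ≤ E)
    (hbig : 7*((x*y)*z^2)*z ≤ 2*(n^2*E^2)) :
    1 ≤ z - x - y + 1 ∧ 7*(x*y*z) ≤ 2*n^2*(z-x-y+1)^2 := by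
  have hz0 : (0:ℤ) < z := by linarith
  have hexp : E = z*(z-x-y) - n := by rw [hE]; ring
  have hT : E ≤ z*(z - x - y + 1) := by
    have : z*(z-x-y+1) = z*(z-x-y) + z := by ring
    linarith only [hexp, this, hnlb, hx, hxy, hyz]
  have hT1 : 1 ≤ z - x - y + 1 := by
    by_contra hc
    push_neg at hc
    have h0 : z - x - y + 1 ≤ 0 := by linarith
    have : z*(z-x-y+1) ≤ 0 := mul_nonpos_of_nonneg_of_nonpos hz0.le h0
    linarith
  refine ⟨hT1, ?_⟩
  have hzT1 : 1 ≤ z*(z-x-y+1) := by linarith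
  have hE2 : E^2 ≤ (z*(z-x-y+1))^2 := sq_le_sq' (by linarith) hT
  have hmul : 2*n^2*E^2 ≤ 2*n^2*(z*(z-x-y+1))^2 := by
    have := mul_le_mul_of_nonneg_left hE2 (by positivity : (0:ℤ) ≤ 2*n^2)
    linarith only [this]
  have c1 : 7*((x*y)*z^2)*z ≤ 2*n^2*(z*(z-x-y+1))^2 := by linarith only [hbig, hmul]
  have c2 : z^2*(7*(x*y*z)) ≤ z^2*(2*n^2*(z-x-y+1)^2) := by linarith only [c1]
  exact le_of_mul_le_mul_left c2 (by positivity)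

lemma core_dichotomy {n x y z r s t : ℤ} (hn : 2 ≤ |n|) (hx : n^2 < x) (hxy : x < y) (hyz : y < z)
    (hr : 0 ≤ r) (hs : 0 ≤ s) (ht : 0 ≤ t)
    (hr2 : r^2 = x*y + n) (hs2 : s^2 = x*z + n) (ht2 : t^2 = y*z + n) :
    z^2 - (x+y)*z - n = z*r + s*t ∨
      (1 ≤ z - x - y + 1 ∧ 7*(x*y*z) ≤ 2*n^2*(z-x-y+1)^2) := by
  have hA2 : |n|^2 = n^2 := sq_abs n
  have hnn : n ≤ |n| := le_abs_self n
  have hnn' : -|n| ≤ n := neg_abs_le n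
  have habs0 : 0 ≤ |n| := abs_nonneg n
  have h4 : 4 ≤ n^2 := by
    have h := pow_le_pow_left₀ (by norm_num : (0:ℤ) ≤ 2) hn 2
    rw [hA2] at h
    linarith [h]
  have h2abs : 2*|n| ≤ n^2 := by
    have h := mul_le_mul_of_nonneg_right hn habs0
    rw [abs_mul_abs_self] at h
    have h2 : n*n = n^2 := by ring
    linarith [h, h2.le, h2.ge]
  have hxpos : 5 ≤ x := by linarith
  have hy : x + 1 ≤ y := hxy
  have hz : y + 1 ≤ z := hyz
  have habs_lt_x : |n| < x := by linarith
  have hzpos : (0:ℤ) < z := by linarith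
  have hx0 : (0:ℤ) < x := by linarith
  have hy0 : (0:ℤ) < y := by linarith
  have hw2 : (z*r - s*t)^2 = z*(n*(x+y+z) + 2*(x*y*z) - 2*(r*s*t)) + n^2 := by
    linear_combination z^2*hr2 + s^2*ht2 + (y*z+n)*hs2
  have hwE : (z*r - s*t)*(z*r + s*t) = n*(z^2 - (x+y)*z - n) := by
    linear_combination z^2*hr2 - s^2*ht2 - (y*z+n)*hs2
  set e : ℤ := n*(x+y+z) + 2*(x*y*z) - 2*(r*s*t) with he
  have he0 : 0 ≤ e := by
    by_contra hc
    push_neg at hc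
    have h1 : e ≤ -1 := by linarith
    have h2 : z*e ≤ z*(-1) := mul_le_mul_of_nonneg_left h1 hzpos.le
    have hn2z : n^2 < z := by linarith
    nlinarith [sq_nonneg (z*r - s*t), hw2, h2, hn2z]
  rcases (eq_or_lt_of_le he0).imp Eq.symm id with he1 | he1
  · -- e = 0 : regular case
    left
    have hw2' : (z*r - s*t)^2 = n^2 := by rw [hw2, he1]; ring
    have hfac : (z*r - s*t - n)*(z*r - s*t + n) = 0 := by linear_combination hw2'
    have hxyprod : x*(x+1) ≤ x*y := mul_le_mul_of_nonneg_left hy hx0.le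
    have hrx : x < r := by
      have hgt : x^2 < r^2 := by nlinarith [hr2, hxyprod, hnn', habs_lt_x]
      exact lt_of_pow_lt_pow_left₀ 2 hr hgt
    have hne : n ≠ 0 := by
      intro h0
      rw [h0] at hn
      norm_num at hn
    rcases mul_eq_zero.mp hfac with h | h
    · have hw : z*r - s*t = n := by linarith
      rw [hw] at hwE
      exact (mul_left_cancel₀ hne hwE).symm
    · exfalso
      have hw : z*r - s*t = -n := by linarith
      rw [hw] at hwE
      have hEE : z^2 - (x+y)*z - n = -(z*r + s*t) := by
        have h2 : n * (-(z*r+s*t)) = n * (z^2 - (x+y)*z - n) := by linarith only [hwE]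
        exact (mul_left_cancel₀ hne h2).symm
      have hst : 0 ≤ s*t := mul_nonneg hs ht
      have hzr : z*(x+1) ≤ z*r := mul_le_mul_of_nonneg_left hrx hzpos.le
      have hzy : z*1 ≤ z*(z-y) := mul_le_mul_of_nonneg_left (by linarith) hzpos.le
      nlinarith [hEE, hst, hzr, hzy, habs_lt_x, hnn]
  · -- e ≥ 1
    right
    have he1' : 1 ≤ e := he1
    have hq0 : 0 ≤ r*s*t := mul_nonneg (mul_nonneg hr hs) ht
    have hq2 : (r*s*t)^2 = (x*y+n)*(x*z+n)*(y*z+n) := by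
      linear_combination (s^2*t^2)*hr2 + (x*y+n)*s^2*ht2 + (x*y+n)*(y*z+n)*hs2
    have hxA : |n|^2 + 1 ≤ x := by linarith [hA2.le, hA2.ge, hx]
    have hyA : |n|^2 + 2 ≤ y := by linarith
    have hzA : |n|^2 + 3 ≤ z := by linarith
    obtain ⟨ha1, ha2, ha3⟩ := aux_A |n| hn
    have hmulxy : (|n|^2+1)*(|n|^2+2) ≤ x*y := mul_le_mul hxA hyA (by positivity) (by linarith)
    have hmulxz : (|n|^2+1)*(|n|^2+3) ≤ x*z := mul_le_mul hxA hzA (by positivity) (by linarith)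
    have hmulyz : (|n|^2+2)*(|n|^2+3) ≤ y*z := mul_le_mul hyA hzA (by positivity) (by linarith)
    have hxy15 : 15*|n| ≤ x*y := by linarith
    have hxz35 : 35*|n| ≤ 2*(x*z) := by linarith
    have hyz21 : 21*|n| ≤ y*z := by linarith
    have h14 : 14*(x*y) ≤ 15*(x*y+n) := by linarith
    have h33 : 33*(x*z) ≤ 35*(x*z+n) := by linarith
    have h20 : 20*(y*z) ≤ 21*(y*z+n) := by linarith
    have hxypos : 0 < x*y := mul_pos hx0 hy0
    have hxzpos : 0 < x*z := mul_pos hx0 hzpos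
    have hyzpos : 0 < y*z := mul_pos hy0 hzpos
    have hxyn : 0 < x*y + n := by linarith
    have hxzn : 0 < x*z + n := by linarith
    have hyzn : 0 < y*z + n := by linarith
    have hP : 9240*((x*y)*(x*z)*(y*z)) ≤ 11025*((x*y+n)*(x*z+n)*(y*z+n)) := by
      have h1 : (14*(x*y))*(33*(x*z)) ≤ (15*(x*y+n))*(35*(x*z+n)) :=
        mul_le_mul h14 h33 (by linarith) (by linarith)
      have hprodpos : (0:ℤ) ≤ (15*(x*y+n))*(35*(x*z+n)) :=
        mul_nonneg (by linarith) (by linarith)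
      have h2 : ((14*(x*y))*(33*(x*z)))*(20*(y*z)) ≤ ((15*(x*y+n))*(35*(x*z+n)))*(21*(y*z+n)) :=
        mul_le_mul h1 h20 (by linarith) hprodpos
      linarith only [h2]
    have hxyz : 0 < x*y*z := mul_pos hxypos hzpos
    have hPP : 9240*(x*y*z)^2 ≤ 11025*(r*s*t)^2 := by
      calc 9240*(x*y*z)^2 = 9240*((x*y)*(x*z)*(y*z)) := by ring
        _ ≤ 11025*((x*y+n)*(x*z+n)*(y*z+n)) := hP
        _ = 11025*(r*s*t)^2 := by rw [hq2]
    have hqlb : 9*(x*y*z) ≤ 10*(r*s*t) := aux_sqrt _ _ hq0 hxyz hPP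
    have hS : (z*r + s*t)^2 = z^2*(x*y+n) + 2*z*(r*s*t) + (x*z+n)*(y*z+n) := by
      linear_combination z^2*hr2 + s^2*ht2 + (y*z+n)*hs2
    have h44 : 660*((x*y)*z^2) ≤ 735*((x*z+n)*(y*z+n)) := by
      have h1 : (33*(x*z))*(20*(y*z)) ≤ (35*(x*z+n))*(21*(y*z+n)) :=
        mul_le_mul h33 h20 (by linarith) (by linarith)
      linarith only [h1]
    have k1 : 14*((x*y)*z^2) ≤ 15*((x*y+n)*z^2) := by
      have := mul_le_mul_of_nonneg_right h14 (sq_nonneg z)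
      linarith only [this]
    have k2 : 9*((x*y)*z^2) ≤ 10*((r*s*t)*z) := by
      have := mul_le_mul_of_nonneg_right hqlb hzpos.le
      linarith only [this]
    have hXY : (0:ℤ) ≤ (x*y)*z^2 := by positivity
    have hSlb : 7*((x*y)*z^2) ≤ 2*(z*r + s*t)^2 := by
      linarith only [hS, k1, k2, h44, hXY]
    set E : ℤ := z^2 - (x+y)*z - n with hEdef
    have hkey : z*(z*r+s*t)^2 ≤ n^2*E^2 := by
      have h1 : (n*E)^2 = (z*e + n^2)*(z*r+s*t)^2 := by
        calc (n*E)^2 = ((z*r - s*t)*(z*r + s*t))^2 := by rw [hwE]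
          _ = (z*r - s*t)^2 * (z*r+s*t)^2 := by ring
          _ = (z*e + n^2)*(z*r+s*t)^2 := by rw [hw2]
      have hze : 0 ≤ z*(e-1) := mul_nonneg hzpos.le (by linarith)
      have m1 : 0 ≤ (z*(e-1)+n^2)*(z*r+s*t)^2 :=
        mul_nonneg (by linarith [sq_nonneg n]) (sq_nonneg _)
      linarith only [h1, m1]
    have hbig : 7*((x*y)*z^2)*z ≤ 2*(n^2*E^2) := by
      have h5 := mul_le_mul_of_nonneg_right hSlb hzpos.le
      linarith only [h5, hkey]
    have hEp : 1 ≤ E := aux_Epos n x y z E h4 hx hxy hyz (by linarith) hEdef hbig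
    exact aux_final n x y z E h4 hx hxy hyz (by linarith) (by linarith) hEdef hEp hbig

lemma lemA {n x y z r s t : ℤ} (hn : 2 ≤ |n|) (hx : n^2 < x) (hxy : x < y) (hyz : y < z)
    (hr : 0 ≤ r) (hs : 0 ≤ s) (ht : 0 ≤ t)
    (hr2 : r^2 = x*y + n) (hs2 : s^2 = x*z + n) (ht2 : t^2 = y*z + n) :
    7*x < 2*z := by
  have hA2 : |n|^2 = n^2 := sq_abs n
  have hnn : n ≤ |n| := le_abs_self n
  have hnn' : -|n| ≤ n := neg_abs_le n
  have habs0 : 0 ≤ |n| := abs_nonneg n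
  have h4 : 4 ≤ n^2 := by
    have h := pow_le_pow_left₀ (by norm_num : (0:ℤ) ≤ 2) hn 2
    rw [hA2] at h; linarith [h]
  have h2abs : 2*|n| ≤ n^2 := by
    have h := mul_le_mul_of_nonneg_right hn habs0
    rw [abs_mul_abs_self] at h
    have h2 : n*n = n^2 := by ring
    linarith [h, h2.le, h2.ge]
  have habs_lt_x : |n| < x := by linarith
  have hx0 : (0:ℤ) < x := by linarith
  have hy0 : (0:ℤ) < y := by linarith
  have hz0 : (0:ℤ) < z := by linarith
  rcases core_dichotomy hn hx hxy hyz hr hs ht hr2 hs2 ht2 with heq | ⟨hT1, hbig⟩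
  · -- regular case : z > 4x
    have hxyprod : x*(x+1) ≤ x*y := mul_le_mul_of_nonneg_left hxy hx0.le
    have hrx : x < r := by
      have hgt : x^2 < r^2 := by nlinarith [hr2, hxyprod, hnn', habs_lt_x]
      exact lt_of_pow_lt_pow_left₀ 2 hr hgt
    have hst : x*z < s*t := by
      have hst2 : (s*t)^2 = (x*z+n)*(y*z+n) := by
        rw [mul_pow, hs2, ht2]
      have hyx : x*z^2*1 ≤ x*z^2*(y-x) :=
        mul_le_mul_of_nonneg_left (by linarith) (by positivity)
      have hxy2z : (x+y)*z ≤ (2*z-3)*z := mul_le_mul_of_nonneg_right (by linarith) hz0.le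
      have habsz : (|n|)*((x+y)*z) ≤ (|n|)*((2*z-3)*z) := mul_le_mul_of_nonneg_left hxy2z habs0
      have hn1 : (-n)*((x+y)*z) ≤ (|n|)*((2*z-3)*z) := by
        have h9 : (-n)*((x+y)*z) ≤ (|n|)*((x+y)*z) := by
          apply mul_le_mul_of_nonneg_right (by linarith) (by positivity)
        linarith
      have hx2N : 2*|n| + 1 ≤ x := by linarith
      have hz2 : (0:ℤ) < z^2 := by positivity
      have hfin : (x*z)^2 < (s*t)^2 := by
        rw [hst2]
        have hkey : (x*z+n)*(y*z+n) - (x*z)^2 = x*z^2*(y-x) + n*((x+y)*z) + n^2 := by ring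
        have hzz : (2*|n|)*z^2 ≤ (x-1)*z^2 := mul_le_mul_of_nonneg_right (by linarith) hz2.le
        nlinarith [hkey, hyx, hn1, hzz, habs0, hz2, sq_nonneg n, mul_pos hz0 hz0]
      have := lt_of_pow_lt_pow_left₀ 2 (mul_nonneg hs ht) hfin
      exact this
    have hzr : z*(x+1) ≤ z*r := mul_le_mul_of_nonneg_left hrx hz0.le
    have hyzb : (x+1)*z ≤ y*z := mul_le_mul_of_nonneg_right (by linarith) hz0.le
    -- z^2 = (x+y)z + n + zr + st > (4x+1) z
    have hzgt : (4*x+1)*z < z^2 := by nlinarith [heq, hzr, hst, hyzb, hnn', habs_lt_x, hz0]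
    have hzz : (4*x+1)*z < z*z := by nlinarith [hzgt]
    have : 4*x+1 < z := lt_of_mul_lt_mul_right hzz hz0.le
    linarith
  · -- big case
    by_contra hc
    push_neg at hc   -- 2z ≤ 7x
    have hn2x : n^2 ≤ x - 1 := by linarith
    set T : ℤ := z - x - y + 1 with hT
    have hTub : T ≤ z - 2*x := by linarith
    have hT2 : T^2 ≤ (z-2*x)^2 := sq_le_sq' (by linarith) hTub
    have c1 : 2*n^2*T^2 ≤ 2*((x-1)*(z-2*x)^2) := by
      have := mul_le_mul hn2x hT2 (sq_nonneg T) (by linarith)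
      linarith only [this]
    have c2 : 4*(z-2*x)^2 ≤ 9*x^2 := by nlinarith [hc, hx0]
    have c3 : (x-1)*(4*(z-2*x)^2) ≤ (x-1)*(9*x^2) := by
      apply mul_le_mul_of_nonneg_left c2 (by linarith)
    have c4 : 28*(x*y*z) ≤ 9*x^2*(x-1) := by nlinarith [hbig, c1, c3]
    have c5 : x*x*x < x*y*z := by
      have d1 : x*x ≤ x*y := mul_le_mul_of_nonneg_left (by linarith) hx0.le
      have e1 : (x*x)*x < (x*x)*z := by
        apply mul_lt_mul_of_pos_left (by linarith) (by positivity)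
      have e2 : (x*x)*z ≤ (x*y)*z := mul_le_mul_of_nonneg_right d1 hz0.le
      linarith [e1, e2]
    nlinarith [c4, c5, hx0, mul_pos hx0 hx0]

lemma lemB {n a b c d r1 s1 r2 s2 t : ℤ} (hn : 2 ≤ |n|)
    (ha : n^2 < a) (hab : a < b) (hbc : b < c) (hcd : c < d)
    (hr1 : 0 ≤ r1) (hs1 : 0 ≤ s1) (hr2 : 0 ≤ r2) (hs2 : 0 ≤ s2) (ht : 0 ≤ t)
    (er1 : r1^2 = a*c + n) (es1 : s1^2 = a*d + n)
    (er2 : r2^2 = b*c + n) (es2 : s2^2 = b*d + n) (et : t^2 = c*d + n) :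
    24*c < 5*d := by
  have hb : n^2 < b := by linarith
  have hd0 : (0:ℤ) < d := by nlinarith [sq_nonneg n]
  have hc0 : (0:ℤ) < c := by nlinarith [sq_nonneg n]
  have hca : (0:ℤ) < a := by nlinarith [sq_nonneg n]
  have D1 := core_dichotomy hn ha (by linarith : a < c) hcd hr1 hs1 ht er1 es1 et
  have D2 := core_dichotomy hn hb hbc hcd hr2 hs2 ht er2 es2 et
  -- helper for the big case
  have bigcase : ∀ x : ℤ, n^2 < x → x < c →
      (1 ≤ d - x - c + 1 ∧ 7*(x*c*d) ≤ 2*n^2*(d-x-c+1)^2) → 24*c < 5*d := by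
    intro x hx hxc ⟨hT1, hbig⟩
    by_contra hcon
    push_neg at hcon  -- 5d ≤ 24c
    have hx0 : (0:ℤ) < x := by nlinarith [sq_nonneg n]
    have hn2x : n^2 ≤ x - 1 := by linarith
    set T : ℤ := d - x - c + 1 with hT
    have hTub : T ≤ d - c := by linarith
    have hT2 : T^2 ≤ (d-c)^2 := sq_le_sq' (by linarith) hTub
    have c1 : 2*n^2*T^2 ≤ 2*((x-1)*(d-c)^2) := by
      have := mul_le_mul hn2x hT2 (sq_nonneg T) (by linarith)
      linarith only [this]
    have c2 : 7*(x*(c*d)) ≤ 2*x*(d-c)^2 - 2*(d-c)^2 := by nlinarith [hbig, c1]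
    have c3 : x*(7*(c*d)) ≤ x*(2*(d-c)^2) := by nlinarith [c2, sq_nonneg (d-c)]
    have c4 : 7*(c*d) ≤ 2*(d-c)^2 := le_of_mul_le_mul_left c3 hx0
    have c5 : 0 ≤ (d-c)*(24*c-5*d) := mul_nonneg (by linarith) (by linarith)
    nlinarith [c4, c5, mul_pos hc0 hd0]
  rcases D1 with E1 | B1
  swap
  · exact bigcase a ha (by linarith) B1
  rcases D2 with E2 | B2
  swap
  · exact bigcase b hb hbc B2
  · -- both regular: contradiction
      exfalso
      have hrr : r1 < r2 := by
        have h1 : r1^2 < r2^2 := by nlinarith [er1, er2, hc0]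
        exact lt_of_pow_lt_pow_left₀ 2 hr2 h1
      have hss : s1 < s2 := by
        have h1 : s1^2 < s2^2 := by nlinarith [es1, es2, hd0]
        exact lt_of_pow_lt_pow_left₀ 2 hs2 h1
      have m1 : d*(r1+1) ≤ d*r2 := mul_le_mul_of_nonneg_left (by linarith) hd0.le
      have m2 : t*s1 ≤ t*s2 := mul_le_mul_of_nonneg_left (by linarith) ht
      have m3 : 1*d ≤ (b-a)*d := mul_le_mul_of_nonneg_right (by linarith) hd0.le
      -- E1 - E2 : (b-a)*d = d*(r1-r2) + t*(s1-s2)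
      linarith only [E1, E2, m1, m2, m3, hd0]

lemma log35 : (5:ℝ)/4 ≤ Real.log (7/2) := by
  rw [Real.le_log_iff_exp_le (by norm_num : (0:ℝ) < 7/2)]
  by_contra hc
  push_neg at hc
  have h4 : ((7:ℝ)/2)^4 < (Real.exp (5/4))^4 :=
    pow_lt_pow_left₀ hc (by norm_num) (by norm_num)
  have he : (Real.exp (5/4))^4 = Real.exp 5 := by
    rw [← Real.exp_nat_mul]; norm_num
  have h5 : Real.exp 5 = (Real.exp 1)^5 := by
    rw [← Real.exp_nat_mul]; norm_num
  have hb : (Real.exp 1)^5 < (2.7182818286:ℝ)^5 :=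
    pow_lt_pow_left₀ Real.exp_one_lt_d9 (Real.exp_pos 1).le (by norm_num)
  rw [he, h5] at h4
  norm_num at h4 hb
  linarith

lemma log48 : (14:ℝ)/9 ≤ Real.log (24/5) := by
  rw [Real.le_log_iff_exp_le (by norm_num : (0:ℝ) < 24/5)]
  by_contra hc
  push_neg at hc
  have h4 : ((24:ℝ)/5)^9 < (Real.exp (14/9))^9 :=
    pow_lt_pow_left₀ hc (by norm_num) (by norm_num)
  have he : (Real.exp (14/9))^9 = Real.exp 14 := by
    rw [← Real.exp_nat_mul]; norm_num
  have h5 : Real.exp 14 = (Real.exp 1)^14 := by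
    rw [← Real.exp_nat_mul]; norm_num
  have hb : (Real.exp 1)^14 < (2.7182818286:ℝ)^14 :=
    pow_lt_pow_left₀ Real.exp_one_lt_d9 (Real.exp_pos 1).le (by norm_num)
  rw [he, h5] at h4
  norm_num at h4 hb
  linarith

theorem stmt_9 (n : ℤ) (hn : 2 ≤ |n|) (m : ℕ) (a : Fin m → ℤ)
    (hmono : StrictMono a)
    (hlow : ∀ i, n^2 < a i) (hhigh : ∀ i, a i < |n|^3)
    (hsq : ∀ i j, i ≠ j → IsSquare (a i * a j + n)) :
    (m : ℝ) < 0.65 * Real.log |(n:ℝ)| + 2.24 := by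
  have habs : |(n:ℝ)| = ((|n| : ℤ) : ℝ) := by rw [Int.cast_abs]
  have hA1 : (2:ℝ) ≤ ((|n| : ℤ) : ℝ) := by exact_mod_cast hn
  have hlogpos : 0 < Real.log |(n:ℝ)| := by
    rw [habs]; exact Real.log_pos (by linarith)
  rcases le_or_gt m 2 with hm | hm
  · have : (m:ℝ) ≤ 2 := by exact_mod_cast hm
    nlinarith [hlogpos]
  · -- m ≥ 3
    have hm3 : 3 ≤ m := hm
    have root : ∀ i j : Fin m, i ≠ j → ∃ k : ℤ, 0 ≤ k ∧ k^2 = a i * a j + n := by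
      intro i j h
      obtain ⟨k, hk⟩ := hsq i j h
      exact ⟨|k|, abs_nonneg k, by rw [sq_abs, pow_two]; exact hk.symm⟩
    have hlt : ∀ (i j : ℕ) (hi : i < m) (hj : j < m), i < j →
        a ⟨i, hi⟩ < a ⟨j, hj⟩ := by
      intro i j hi hj hij
      exact hmono (by simpa [Fin.lt_def] using hij)
    have hne : ∀ (i j : ℕ) (hi : i < m) (hj : j < m), i ≠ j →
        (⟨i, hi⟩ : Fin m) ≠ ⟨j, hj⟩ := by
      intro i j hi hj hij
      simp [Fin.ext_iff, hij]
    -- base : 7 a₀ < 2 a₂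
    have base : 7 * a ⟨0, by omega⟩ < 2 * a ⟨2, by omega⟩ := by
      obtain ⟨r, hr0, hr2⟩ := root ⟨0, by omega⟩ ⟨1, by omega⟩ (hne _ _ _ _ (by norm_num))
      obtain ⟨s, hs0, hs2⟩ := root ⟨0, by omega⟩ ⟨2, by omega⟩ (hne _ _ _ _ (by norm_num))
      obtain ⟨t, ht0, ht2⟩ := root ⟨1, by omega⟩ ⟨2, by omega⟩ (hne _ _ _ _ (by norm_num))
      exact lemA hn (hlow _) (hlt 0 1 _ _ (by norm_num)) (hlt 1 2 _ _ (by norm_num))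
        hr0 hs0 ht0 hr2 hs2 ht2
    -- step : 24 a_{k+2} < 5 a_{k+3}
    have step : ∀ p : ℕ, ∀ hp : p + 4 ≤ m, 24 * a ⟨p+2, by omega⟩ < 5 * a ⟨p+3, by omega⟩ := by
      intro p hp
      obtain ⟨r1, hr10, er1⟩ := root ⟨0, by omega⟩ ⟨p+2, by omega⟩ (hne _ _ _ _ (by omega))
      obtain ⟨s1, hs10, es1⟩ := root ⟨0, by omega⟩ ⟨p+3, by omega⟩ (hne _ _ _ _ (by omega))
      obtain ⟨r2, hr20, er2⟩ := root ⟨1, by omega⟩ ⟨p+2, by omega⟩ (hne _ _ _ _ (by omega))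
      obtain ⟨s2, hs20, es2⟩ := root ⟨1, by omega⟩ ⟨p+3, by omega⟩ (hne _ _ _ _ (by omega))
      obtain ⟨t, ht0, et⟩ := root ⟨p+2, by omega⟩ ⟨p+3, by omega⟩ (hne _ _ _ _ (by omega))
      exact lemB hn (hlow _) (hlt 0 1 _ _ (by norm_num)) (hlt 1 (p+2) _ _ (by omega))
        (hlt (p+2) (p+3) _ _ (by omega)) hr10 hs10 hr20 hs20 ht0 er1 es1 er2 es2 et
    -- growth
    have grow : ∀ p : ℕ, ∀ hp : p + 3 ≤ m,
        ((7:ℝ)/2) * ((24:ℝ)/5)^p * ((a ⟨0, by omega⟩ : ℤ) : ℝ) < ((a ⟨p+2, by omega⟩ : ℤ) : ℝ) := by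
      intro p
      induction p with
      | zero =>
        intro hp
        have hb : (7:ℝ) * ((a ⟨0, by omega⟩ : ℤ) : ℝ) < 2 * ((a ⟨2, by omega⟩ : ℤ) : ℝ) := by
          exact_mod_cast base
        simpa using by linarith
      | succ p ih =>
        intro hp
        have h1 := ih (by omega)
        have h2 : (24:ℝ) * ((a ⟨p+2, by omega⟩ : ℤ) : ℝ) < 5 * ((a ⟨p+3, by omega⟩ : ℤ) : ℝ) := by
          exact_mod_cast step p (by omega)
        have h3 : ((24:ℝ)/5) * (((7:ℝ)/2) * ((24:ℝ)/5)^p * ((a ⟨0, by omega⟩ : ℤ) : ℝ))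
            < ((24:ℝ)/5) * ((a ⟨p+2, by omega⟩ : ℤ) : ℝ) := by
          apply mul_lt_mul_of_pos_left h1 (by norm_num)
        calc ((7:ℝ)/2) * ((24:ℝ)/5)^(p+1) * ((a ⟨0, by omega⟩ : ℤ) : ℝ)
            = ((24:ℝ)/5) * (((7:ℝ)/2) * ((24:ℝ)/5)^p * ((a ⟨0, by omega⟩ : ℤ) : ℝ)) := by ring
          _ < ((24:ℝ)/5) * ((a ⟨p+2, by omega⟩ : ℤ) : ℝ) := h3
          _ ≤ ((a ⟨p+3, by omega⟩ : ℤ) : ℝ) := by linarith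
    have hg := grow (m-3) (by omega)
    -- bounds
    set A : ℝ := ((|n| : ℤ) : ℝ) with hA
    have ha0 : ((n^2 : ℤ) : ℝ) < ((a ⟨0, by omega⟩ : ℤ) : ℝ) := by exact_mod_cast hlow _
    have hA2 : A^2 = ((n^2 : ℤ) : ℝ) := by
      rw [hA, ← Int.cast_pow, sq_abs]
    have ha0' : A^2 < ((a ⟨0, by omega⟩ : ℤ) : ℝ) := by rw [hA2]; exact ha0
    have hA0 : (0:ℝ) < A := by linarith
    have hupper : ((a ⟨m-3+2, by omega⟩ : ℤ) : ℝ) < A^3 := by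
      have := hhigh (⟨m-3+2, by omega⟩ : Fin m)
      have h2 : ((a ⟨m-3+2, by omega⟩ : ℤ) : ℝ) < (((|n|:ℤ)^3 : ℤ) : ℝ) := by exact_mod_cast this
      calc ((a ⟨m-3+2, by omega⟩ : ℤ) : ℝ) < (((|n|:ℤ)^3 : ℤ) : ℝ) := h2
        _ = A^3 := by rw [hA, ← Int.cast_pow]
    have ha0pos : (0:ℝ) < ((a ⟨0, by omega⟩ : ℤ) : ℝ) := by nlinarith [hA0]
    have hX : ((7:ℝ)/2) * ((24:ℝ)/5)^(m-3) < A := by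
      have hc1 : ((7:ℝ)/2) * ((24:ℝ)/5)^(m-3) * ((a ⟨0, by omega⟩ : ℤ) : ℝ) < A^3 := by
        calc ((7:ℝ)/2) * ((24:ℝ)/5)^(m-3) * ((a ⟨0, by omega⟩ : ℤ) : ℝ)
            < ((a ⟨m-3+2, by omega⟩ : ℤ) : ℝ) := hg
          _ < A^3 := hupper
      have hc2 : A^3 < A * ((a ⟨0, by omega⟩ : ℤ) : ℝ) := by
        have : A * A^2 < A * ((a ⟨0, by omega⟩ : ℤ) : ℝ) := by
          apply mul_lt_mul_of_pos_left ha0' hA0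
        calc A^3 = A * A^2 := by ring
          _ < A * ((a ⟨0, by omega⟩ : ℤ) : ℝ) := this
      have := lt_trans hc1 hc2
      exact lt_of_mul_lt_mul_right this ha0pos.le
    -- take logs
    have hXpos : (0:ℝ) < ((7:ℝ)/2) * ((24:ℝ)/5)^(m-3) := by positivity
    have hlog1 : Real.log (((7:ℝ)/2) * ((24:ℝ)/5)^(m-3)) ≤ Real.log A :=
      Real.log_le_log hXpos hX.le
    have hlog2 : Real.log (((7:ℝ)/2) * ((24:ℝ)/5)^(m-3))
        = Real.log (7/2) + (m-3 : ℕ) * Real.log (24/5) := by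
      rw [Real.log_mul (by norm_num) (by positivity), Real.log_pow]
    have hcast : ((m-3 : ℕ) : ℝ) = (m:ℝ) - 3 := by
      have : (3:ℕ) ≤ m := hm3
      push_cast [Nat.cast_sub this]
      ring
    have hmul : ((m-3 : ℕ) : ℝ) * ((14:ℝ)/9) ≤ ((m-3 : ℕ) : ℝ) * Real.log (24/5) :=
      mul_le_mul_of_nonneg_left log48 (by positivity)
    have hm3r : (3:ℝ) ≤ (m:ℝ) := by exact_mod_cast hm3
    rw [habs]
    have hfin : Real.log (7/2) + (m-3 : ℕ) * Real.log (24/5) ≤ Real.log A := by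
      rw [← hlog2]; exact hlog1
    nlinarith [log35, hmul, hfin, hcast, hm3r]
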